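/- Let p : K → L be a continuous surjection between compact Hausdorff spaces, μ a regular Borel probability measure on L, φ : K → ℝ continuous, and r ∈ ℝ. Then there exists a regular Borel probability measure ν on K such that ∫_K ψ(p(x)) dν(x) = ∫_L ψ dμ for every continuous ψ : L → ℝ and ∫_K φ dν = r, if and only if sup { ∫_L ψ dμ : ψ : L → ℝ continuous, ψ(p(x)) ≤ φ(x) for all x ∈ K } ≤ r ≤ inf { ∫_L ψ dμ : ψ : L → ℝ continuous, ψ(p(x)) ≥ φ(x) for all x ∈ K }. -/

import Mathlib

open MeasureTheory

set_option linter.unusedSectionVars false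
set_option linter.unusedVariables false
set_option maxHeartbeats 1000000

open MeasureTheory Set Function TopologicalSpace
open scoped ENNReal NNReal Pointwise

noncomputable section

namespace RMK0

variable {X : Type*} [TopologicalSpace X] [CompactSpace X] [T2Space X]

/-- Test functions for the Riesz content of a set `C`. -/
def TS (Λ : C(X, ℝ) →ₗ[ℝ] ℝ) (C : Set X) : Set ℝ :=
  {t | ∃ f : C(X, ℝ), (∀ x, 0 ≤ f x) ∧ (∀ x ∈ C, 1 ≤ f x) ∧ Λ f = t}

variable (Λ : C(X, ℝ) →ₗ[ℝ] ℝ) (hpos : ∀ f : C(X, ℝ), (∀ x, 0 ≤ f x) → 0 ≤ Λ f)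

theorem TS_nonempty (C : Set X) : (TS Λ C).Nonempty :=
  ⟨Λ 1, 1, fun x => by simp, fun x _ => by simp, rfl⟩

include hpos in
theorem TS_bddBelow (C : Set X) : BddBelow (TS Λ C) :=
  ⟨0, by rintro t ⟨f, h0, _, rfl⟩; exact hpos f h0⟩

include hpos in
theorem sInf_TS_nonneg (C : Set X) : 0 ≤ sInf (TS Λ C) :=
  le_csInf (TS_nonempty Λ C) (by rintro t ⟨f, h0, _, rfl⟩; exact hpos f h0)

theorem TS_anti {C₁ C₂ : Set X} (h : C₁ ⊆ C₂) : TS Λ C₂ ⊆ TS Λ C₁ := by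
  rintro t ⟨f, h0, h1, rfl⟩
  exact ⟨f, h0, fun x hx => h1 x (h hx), rfl⟩

include hpos in
theorem sInf_TS_mono {C₁ C₂ : Set X} (h : C₁ ⊆ C₂) : sInf (TS Λ C₁) ≤ sInf (TS Λ C₂) :=
  csInf_le_csInf (TS_bddBelow Λ hpos C₁) (TS_nonempty Λ C₂) (TS_anti Λ h)

include hpos in
theorem sInf_TS_le {C : Set X} {f : C(X, ℝ)} (h0 : ∀ x, 0 ≤ f x) (h1 : ∀ x ∈ C, 1 ≤ f x) :
    sInf (TS Λ C) ≤ Λ f :=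
  csInf_le (TS_bddBelow Λ hpos C) ⟨f, h0, h1, rfl⟩

include hpos in
/-- If `0 ≤ f ≤ 1`, then `Λ f` is at most the content of the support of `f`. -/
theorem le_sInf_TS_tsupport {f : C(X, ℝ)} (h0 : ∀ x, 0 ≤ f x) (h1 : ∀ x, f x ≤ 1) :
    Λ f ≤ sInf (TS Λ (tsupport f)) := by
  refine le_csInf (TS_nonempty Λ _) ?_
  rintro t ⟨g, hg0, hg1, rfl⟩
  have hfg : ∀ x, f x ≤ g x := by
    intro x
    by_cases hx : x ∈ tsupport f
    · exact (h1 x).trans (hg1 x hx)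
    · rw [image_eq_zero_of_notMem_tsupport hx]; exact hg0 x
  have := hpos (g - f) (fun x => by simpa using sub_nonneg.2 (hfg x))
  rw [map_sub] at this
  linarith

include hpos in
theorem sInf_TS_add_le {C₁ C₂ : Set X} (hC₁ : IsCompact C₁) (hC₂ : IsCompact C₂)
    (hd : Disjoint C₁ C₂) :
    sInf (TS Λ C₁) + sInf (TS Λ C₂) ≤ sInf (TS Λ (C₁ ∪ C₂)) := by
  refine le_csInf (TS_nonempty Λ _) ?_
  rintro t ⟨f, h0, h1, rfl⟩
  obtain ⟨g, hg0, hg1, hg01⟩ :=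
    exists_continuous_zero_one_of_isClosed hC₂.isClosed hC₁.isClosed hd.symm
  have key : (f * g) + (f * (1 - g)) = f := by ext x; simp; ring
  have e1 : sInf (TS Λ C₁) ≤ Λ (f * g) := by
    refine sInf_TS_le Λ hpos (fun x => mul_nonneg (h0 x) (hg01 x).1) (fun x hx => ?_)
    have : g x = 1 := hg1 hx
    simpa [this] using h1 x (Or.inl hx)
  have e2 : sInf (TS Λ C₂) ≤ Λ (f * (1 - g)) := by
    refine sInf_TS_le Λ hpos (fun x => mul_nonneg (h0 x) (by simpa using (hg01 x).2))
      (fun x hx => ?_)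
    have : g x = 0 := hg0 hx
    have hfx := h1 x (Or.inr hx)
    simp [ContinuousMap.sub_apply, this]
    linarith
  have : Λ (f * g) + Λ (f * (1 - g)) = Λ f := by rw [← map_add, key]
  linarith

include hpos in
theorem sInf_TS_union_le (C₁ C₂ : Set X) :
    sInf (TS Λ (C₁ ∪ C₂)) ≤ sInf (TS Λ C₁) + sInf (TS Λ C₂) := by
  refine le_of_forall_pos_le_add (fun ε hε => ?_)
  obtain ⟨t₁, ht₁, ht₁'⟩ := Real.lt_sInf_add_pos (TS_nonempty Λ C₁) (half_pos hε)
  obtain ⟨t₂, ht₂, ht₂'⟩ := Real.lt_sInf_add_pos (TS_nonempty Λ C₂) (half_pos hε)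
  obtain ⟨f₁, hf₁0, hf₁1, rfl⟩ := ht₁
  obtain ⟨f₂, hf₂0, hf₂1, rfl⟩ := ht₂
  have : sInf (TS Λ (C₁ ∪ C₂)) ≤ Λ (f₁ + f₂) := by
    refine sInf_TS_le Λ hpos (fun x => by
      simpa using add_nonneg (hf₁0 x) (hf₂0 x)) (fun x hx => ?_)
    rcases hx with hx | hx
    · simpa using le_add_of_le_of_nonneg (hf₁1 x hx) (hf₂0 x)
    · simpa using le_add_of_nonneg_of_le (hf₁0 x) (hf₂1 x hx)
  rw [map_add] at this
  linarith

/-- The Riesz content associated to a positive linear functional. -/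
def rieszContent : Content X where
  toFun C := Real.toNNReal (sInf (TS Λ C))
  mono' C₁ C₂ h := Real.toNNReal_mono (sInf_TS_mono Λ hpos h)
  sup_le' C₁ C₂ := by
    have h := sInf_TS_union_le Λ hpos (C₁ : Set X) C₂
    have h1 := sInf_TS_nonneg Λ hpos (C₁ : Set X)
    have h2 := sInf_TS_nonneg Λ hpos (C₂ : Set X)
    rw [← Real.toNNReal_add h1 h2]
    exact Real.toNNReal_mono h
  sup_disjoint' C₁ C₂ hd _ _ := by
    have h1 := sInf_TS_union_le Λ hpos (C₁ : Set X) C₂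
    have h2 := sInf_TS_add_le Λ hpos C₁.2 C₂.2 hd
    have e : sInf (TS Λ ((C₁ ⊔ C₂ : Compacts X) : Set X)) = sInf (TS Λ C₁) + sInf (TS Λ C₂) :=
      le_antisymm h1 h2
    simp only [Compacts.coe_sup] at e ⊢
    rw [e, Real.toNNReal_add (sInf_TS_nonneg Λ hpos _) (sInf_TS_nonneg Λ hpos _)]


theorem rieszContent_apply (C : Compacts X) :
    rieszContent Λ hpos C = (Real.toNNReal (sInf (TS Λ (C : Set X))) : ℝ≥0∞) := rfl

section Meas

variable [MeasurableSpace X] [BorelSpace X]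
include hpos

/-- The Riesz measure associated to a positive linear functional. -/
def rieszMeasure : Measure X := (rieszContent Λ hpos).measure

instance : (rieszMeasure Λ hpos).Regular := Content.regular _
instance : (rieszMeasure Λ hpos).OuterRegular := Content.outerRegular _

variable (hone : Λ 1 = 1)

include hone in
theorem sInf_TS_univ : sInf (TS Λ (univ : Set X)) = 1 := by
  refine le_antisymm ?_ ?_
  · have := sInf_TS_le Λ hpos (C := univ) (f := 1) (fun x => by simp) (fun x _ => by simp)
    simpa [hone] using this
  · refine le_csInf (TS_nonempty Λ _) ?_
    rintro t ⟨f, h0, h1, rfl⟩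
    have := hpos (f - 1) (fun x => by simpa using sub_nonneg.2 (h1 x (mem_univ x)))
    rw [map_sub, hone] at this
    linarith

include hone in
theorem rieszMeasure_univ : rieszMeasure Λ hpos univ = 1 := by
  rw [rieszMeasure, Content.measure_apply _ MeasurableSet.univ,
    (rieszContent Λ hpos).outerMeasure_of_isOpen univ isOpen_univ,
    (rieszContent Λ hpos).innerContent_of_isCompact isCompact_univ isOpen_univ,
    rieszContent_apply]
  simp [Compacts.coe_mk, sInf_TS_univ Λ hpos hone]

include hone in
theorem isProbabilityRieszMeasure : IsProbabilityMeasure (rieszMeasure Λ hpos) :=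
  ⟨rieszMeasure_univ Λ hpos hone⟩

include hone in
/-- Key estimate: if `0 ≤ f ≤ 1` and the support of `f` is contained in an open `U`,
then `Λ f ≤ ν U`. -/
theorem le_rieszMeasure_toReal {f : C(X, ℝ)} (h0 : ∀ x, 0 ≤ f x) (h1 : ∀ x, f x ≤ 1)
    {U : Set X} (hU : IsOpen U) (hsupp : tsupport f ⊆ U) :
    Λ f ≤ (rieszMeasure Λ hpos U).toReal := by
  haveI := isProbabilityRieszMeasure Λ hpos hone
  have hKc : IsCompact (tsupport f) := (isClosed_tsupport f).isCompact
  have step1 : Λ f ≤ sInf (TS Λ (tsupport f)) := le_sInf_TS_tsupport Λ hpos h0 h1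
  have step2 : (rieszContent Λ hpos) ⟨tsupport f, hKc⟩ ≤ rieszMeasure Λ hpos U := by
    rw [rieszMeasure, Content.measure_apply _ hU.measurableSet,
      (rieszContent Λ hpos).outerMeasure_of_isOpen U hU]
    exact (rieszContent Λ hpos).le_innerContent ⟨tsupport f, hKc⟩ ⟨U, hU⟩ hsupp
  have hfin : rieszMeasure Λ hpos U ≠ ⊤ := (measure_lt_top _ _).ne
  have step2' : (Real.toNNReal (sInf (TS Λ (tsupport f))) : ℝ) ≤
      (rieszMeasure Λ hpos U).toReal := by
    have := ENNReal.toReal_mono hfin (le_of_eq_of_le (rieszContent_apply Λ hpos _).symm step2)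
    simpa using this
  rw [Real.coe_toNNReal _ (sInf_TS_nonneg Λ hpos _)] at step2'
  exact step1.trans step2'

include hone in
theorem le_integral_rieszMeasure (f : C(X, ℝ)) :
    Λ f ≤ ∫ x, f x ∂(rieszMeasure Λ hpos) := by
  haveI := isProbabilityRieszMeasure Λ hpos hone
  set ν := rieszMeasure Λ hpos with hνdef
  have hint : ∀ g : C(X, ℝ), Integrable g ν := fun g =>
    (integrable_const (‖g‖)).mono' g.continuous.aestronglyMeasurable
      (ae_of_all _ fun x => g.norm_coe_le_norm x)
  set b := ‖f‖ with hb
  have hb0 : 0 ≤ b := norm_nonneg f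
  have hfb : ∀ x, -b ≤ f x ∧ f x ≤ b := fun x =>
    abs_le.mp (by simpa [Real.norm_eq_abs] using f.norm_coe_le_norm x)
  have key : ∀ ε : ℝ, 0 < ε → ε ≤ 1 → Λ f ≤ (∫ x, f x ∂ν) + ε * (2 * b + 6) := by
    intro ε hε hε1
    set n : ℕ := ⌈(2 * b + 2) / ε⌉₊ with hn
    have hn1 : (2 * b + 2) / ε ≤ (n : ℝ) := Nat.le_ceil _
    have hnpos : 0 < n := by
      have h0 : (0 : ℝ) < (2 * b + 2) / ε := by positivity
      exact Nat.ceil_pos.2 h0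
    have hnR : (0:ℝ) < n := by exact_mod_cast hnpos
    have hnenn : (2 * b + 2) ≤ (n : ℝ) * ε := by
      rw [div_le_iff₀ hε] at hn1; linarith
    have hnub : (n : ℝ) * ε ≤ 2 * b + 2 + ε := by
      have : (n : ℝ) < (2 * b + 2) / ε + 1 := Nat.ceil_lt_add_one (by positivity)
      have := mul_le_mul_of_nonneg_right this.le hε.le
      calc (n:ℝ) * ε ≤ ((2 * b + 2) / ε + 1) * ε := this
        _ = 2 * b + 2 + ε := by field_simp
    set y : ℕ → ℝ := fun j => -b - ε + j * ε with hy
    have hyδ : ∀ j : ℕ, y (j + 1) = y j + ε := by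
      intro j; simp only [hy]; push_cast; ring
    have ymono : Monotone y := by
      intro a c hac
      simp only [hy]
      have : (a:ℝ) ≤ c := by exact_mod_cast hac
      nlinarith
    have hy0 : ∀ x : X, y 0 < f x := by
      intro x; have := (hfb x).1; simp only [hy]; push_cast; linarith
    have hyn : ∀ x : X, f x ≤ y n := by
      intro x; have := (hfb x).2; simp only [hy]; nlinarith
    set E : Fin n → Set X := fun i => f ⁻¹' (Ioc (y i) (y (i + 1))) with hE
    have hEmeas : ∀ i, MeasurableSet (E i) :=
      fun i => f.continuous.measurable measurableSet_Ioc
    have hEmem : ∀ (x : X) (i : Fin n), x ∈ E i ↔ (y i < f x ∧ f x ≤ y (i + 1)) := by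
      intro x i; simp [hE, mem_preimage, mem_Ioc]
    have cover : ∀ x : X, ∃ i : Fin n, x ∈ E i := by
      intro x
      have hdec : DecidablePred fun j : ℕ => f x ≤ y (j + 1) := fun _ => Classical.dec _
      have hsub : n - 1 + 1 = n := by omega
      have hex : ∃ j : ℕ, f x ≤ y (j + 1) := ⟨n - 1, by rw [hsub]; exact hyn x⟩
      set j := Nat.find hex with hjdef
      have hj : f x ≤ y (j + 1) := Nat.find_spec hex
      have hjlt : j < n := by
        have h1 : j ≤ n - 1 := Nat.find_min' hex (by rw [hsub]; exact hyn x)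
        omega
      have hlow : y j < f x := by
        by_cases h0 : j = 0
        · rw [h0]; exact hy0 x
        · obtain ⟨k, hk⟩ := Nat.exists_eq_succ_of_ne_zero h0
          have hmin : ¬ f x ≤ y (k + 1) := Nat.find_min hex (by omega)
          rw [hk]
          exact lt_of_not_ge hmin
      exact ⟨⟨j, hjlt⟩, (hEmem x ⟨j, hjlt⟩).2 ⟨hlow, hj⟩⟩
    have hdisjoint : Pairwise (Disjoint on E) := by
      have main : ∀ i j : Fin n, (i:ℕ) < (j:ℕ) → Disjoint (E i) (E j) := by
        intro i j hij
        refine Set.disjoint_left.2 ?_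
        rintro x hxi hxj
        have h1 := (hEmem x i).1 hxi
        have h2 := (hEmem x j).1 hxj
        have : y ((i:ℕ) + 1) ≤ y (j:ℕ) := ymono (by omega)
        linarith [h1.2, h2.1]
      intro i j hij
      rcases lt_or_gt_of_ne (fun h => hij (Fin.ext h) : (i:ℕ) ≠ (j:ℕ)) with h | h
      · exact main i j h
      · exact (main j i h).symm
    have hUex : ∀ i : Fin n, ∃ U : Set X, IsOpen U ∧ E i ⊆ U ∧
        (∀ x ∈ U, f x < y ((i:ℕ) + 1) + ε) ∧ (ν U).toReal ≤ (ν (E i)).toReal + ε / n := by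
      intro i
      obtain ⟨W, hWE, hWopen, hWlt⟩ := (E i).exists_isOpen_lt_add (μ := ν)
        ((measure_lt_top ν _).ne) (ε := ENNReal.ofReal (ε / n))
        (by simp [ENNReal.ofReal_eq_zero, not_le]; positivity)
      set V : Set X := {x | f x < y ((i:ℕ) + 1) + ε} with hV
      have hVopen : IsOpen V := isOpen_lt f.continuous continuous_const
      refine ⟨W ∩ V, hWopen.inter hVopen, ?_, fun x hx => hx.2, ?_⟩
      · intro x hx
        exact ⟨hWE ((hEmem x i).1 hx |> fun h => (hEmem x i).2 h), by
          have := ((hEmem x i).1 hx).2; simp only [hV, mem_setOf_eq]; linarith⟩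
      · have hle : ν (W ∩ V) ≤ ν (E i) + ENNReal.ofReal (ε / n) :=
          (measure_mono inter_subset_left).trans hWlt.le
        have hfin : ν (E i) + ENNReal.ofReal (ε / n) ≠ ⊤ := by
          exact ENNReal.add_ne_top.2 ⟨(measure_lt_top ν _).ne, ENNReal.ofReal_ne_top⟩
        have := ENNReal.toReal_mono hfin hle
        rwa [ENNReal.toReal_add ((measure_lt_top ν _).ne) ENNReal.ofReal_ne_top,
          ENNReal.toReal_ofReal (by positivity)] at this
    choose U hUopen hUE hUf hUν using hUex
    have hcover : (univ : Set X) ⊆ ⋃ i, U i := fun x _ => by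
      obtain ⟨i, hi⟩ := cover x
      exact mem_iUnion.2 ⟨i, hUE i hi⟩
    obtain ⟨ρ, hρ⟩ := PartitionOfUnity.exists_isSubordinate isClosed_univ U hUopen hcover
    have hsum1 : ∀ x : X, ∑ i, ρ i x = 1 := fun x => by
      rw [← finsum_eq_sum_of_fintype]; exact ρ.sum_eq_one (mem_univ x)
    have hfdecomp : f = ∑ i : Fin n, (ρ i * f : C(X, ℝ)) := by
      ext x
      rw [ContinuousMap.sum_apply]
      simp only [ContinuousMap.mul_apply]
      rw [← Finset.sum_mul, hsum1 x, one_mul]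
    have hΛdecomp : Λ f = ∑ i, Λ (ρ i * f) := by
      conv_lhs => rw [hfdecomp]
      exact map_sum Λ _ _
    set c : Fin n → ℝ := fun i => Λ (ρ i) with hc
    have hc_nonneg : ∀ i, 0 ≤ c i := fun i => hpos _ (fun x => ρ.nonneg i x)
    have hc_sum : ∑ i, c i = 1 := by
      rw [hc, ← map_sum]
      have h1 : (∑ i : Fin n, (ρ i : C(X, ℝ))) = 1 := by
        ext x; rw [ContinuousMap.sum_apply]; simpa using hsum1 x
      rw [h1, hone]
    have hc_le : ∀ i, c i ≤ (ν (E i)).toReal + ε / n := fun i =>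
      (le_rieszMeasure_toReal Λ hpos hone (fun x => ρ.nonneg i x) (fun x => ρ.le_one i x)
        (hUopen i) (hρ i)).trans (hUν i)
    have hterm : ∀ i : Fin n, Λ (ρ i * f) ≤ (y ((i:ℕ) + 1) + ε) * c i := by
      intro i
      have hples : ∀ x, (ρ i * f : C(X, ℝ)) x ≤ (y ((i:ℕ) + 1) + ε) * ρ i x := by
        intro x
        by_cases hx : x ∈ tsupport (ρ i)
        · have hfx : f x < y ((i:ℕ) + 1) + ε := hUf i x (hρ i hx)
          have := mul_le_mul_of_nonneg_left hfx.le (ρ.nonneg i x)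
          simpa [ContinuousMap.mul_apply, mul_comm] using this
        · have h0 : ρ i x = 0 := image_eq_zero_of_notMem_tsupport hx
          simp [ContinuousMap.mul_apply, h0]
      have hnn := hpos ((y ((i:ℕ) + 1) + ε) • ρ i - ρ i * f) (fun x => by
        simp only [ContinuousMap.sub_apply, ContinuousMap.smul_apply, smul_eq_mul]
        linarith [hples x])
      rw [map_sub, Λ.map_smul, smul_eq_mul] at hnn
      simp only [hc]
      linarith
    set m : Fin n → ℝ := fun i => (ν (E i)).toReal with hm
    have hm_nonneg : ∀ i, 0 ≤ m i := fun i => ENNReal.toReal_nonneg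
    have hEunion : ⋃ i, E i = univ := eq_univ_of_forall fun x => mem_iUnion.2 (cover x)
    have hdisC : Set.Pairwise ↑(Finset.univ : Finset (Fin n)) (Disjoint on E) :=
      fun i _ j _ hij => hdisjoint hij
    have hmsum : ∑ i, m i = 1 := by
      have h1 : ν (⋃ i ∈ (Finset.univ : Finset (Fin n)), E i) = ∑ i, ν (E i) :=
        measure_biUnion_finset hdisC (fun i _ => hEmeas i)
      rw [show (⋃ i ∈ (Finset.univ : Finset (Fin n)), E i) = ⋃ i, E i by simp,
        hEunion, measure_univ] at h1
      have h2 := congrArg ENNReal.toReal h1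
      rw [ENNReal.toReal_sum (fun i _ => (measure_lt_top ν _).ne)] at h2
      simpa [hm] using h2.symm
    have hIsum : ∫ x, f x ∂ν = ∑ i, ∫ x in E i, f x ∂ν := by
      have h1 := integral_biUnion_finset (μ := ν) (f := fun x => f x) Finset.univ
        (fun i _ => hEmeas i) hdisC (fun i _ => (hint f).integrableOn)
      rw [show (⋃ i ∈ (Finset.univ : Finset (Fin n)), E i) = ⋃ i, E i by simp,
        hEunion, setIntegral_univ] at h1
      exact h1
    have hIlow : ∀ i : Fin n, y (i:ℕ) * m i ≤ ∫ x in E i, f x ∂ν := fun i =>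
      setIntegral_ge_of_const_le_real (hEmeas i) ((measure_lt_top ν _).ne)
        (fun x hx => ((hEmem x i).1 hx).1.le) ((hint f).integrableOn)
    have hAle : ∑ i : Fin n, y (i:ℕ) * m i ≤ ∫ x, f x ∂ν := by
      rw [hIsum]; exact Finset.sum_le_sum (fun i _ => hIlow i)
    set B := b + ε with hB
    have hylb : ∀ i : Fin n, 0 < y ((i:ℕ) + 1) + ε + B := by
      intro i
      have : y 1 ≤ y ((i:ℕ) + 1) := ymono (by omega)
      have h1 : y 1 = -b := by simp only [hy]; push_cast; ring
      simp only [hB]; linarith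
    have hyub : ∀ i : Fin n, y ((i:ℕ) + 1) + ε + B ≤ 2 * b + 4 := by
      intro i
      have h1 : y ((i:ℕ) + 1) ≤ y n := ymono (by omega)
      have h2 : y n ≤ b + 2 := by
        simp only [hy]; nlinarith
      simp only [hB]; linarith
    have hterm2 : ∀ i ∈ (Finset.univ : Finset (Fin n)),
        (y ((i:ℕ) + 1) + ε) * c i ≤
          y (i:ℕ) * m i + (2 * ε + B) * m i + (ε / n) * (2 * b + 4) - B * c i := by
      intro i _
      have h1 : c i ≤ m i + ε / n := hc_le i
      have h2 := hylb i
      have h3 := hyub i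
      have h4 : y ((i:ℕ) + 1) = y (i:ℕ) + ε := hyδ i
      have h5 : 0 ≤ m i := hm_nonneg i
      have h6 : (0:ℝ) ≤ ε / n := by positivity
      have k1 : (y ((i:ℕ) + 1) + ε + B) * c i ≤ (y ((i:ℕ) + 1) + ε + B) * (m i + ε / n) :=
        mul_le_mul_of_nonneg_left h1 h2.le
      have k2 : (ε / n) * (y ((i:ℕ) + 1) + ε + B) ≤ (ε / n) * (2 * b + 4) :=
        mul_le_mul_of_nonneg_left h3 h6
      have e1 : (y ((i:ℕ) + 1) + ε + B) * (m i + ε / n)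
          = (y (i:ℕ) * m i + (2 * ε + B) * m i) + (ε / n) * (y ((i:ℕ) + 1) + ε + B) := by
        rw [h4]; ring
      have e2 : (y ((i:ℕ) + 1) + ε) * c i = (y ((i:ℕ) + 1) + ε + B) * c i - B * c i := by ring
      linarith
    have hsum2 : ∑ i : Fin n, (y ((i:ℕ) + 1) + ε) * c i ≤
        (∑ i : Fin n, y (i:ℕ) * m i) + (2 * ε + B) * 1 + ε / (n:ℝ) * ((n:ℝ) * (2 * b + 4))
          - B * 1 := by
      refine (Finset.sum_le_sum hterm2).trans (le_of_eq ?_)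
      rw [Finset.sum_sub_distrib, Finset.sum_add_distrib, Finset.sum_add_distrib,
        ← Finset.mul_sum, ← Finset.mul_sum, ← Finset.mul_sum, Finset.sum_const,
        Finset.card_univ, Fintype.card_fin, nsmul_eq_mul, hmsum, hc_sum]
    have hdiv : ε / (n:ℝ) * ((n:ℝ) * (2 * b + 4)) = ε * (2 * b + 4) := by
      field_simp
    have T1 : Λ f ≤ ∑ i : Fin n, (y ((i:ℕ) + 1) + ε) * c i := by
      rw [hΛdecomp]
      exact Finset.sum_le_sum (fun i _ => hterm i)
    have hfin := T1.trans hsum2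
    rw [hdiv] at hfin
    simp only [hB] at hfin
    linarith
  refine le_of_forall_pos_le_add (fun δ hδ => ?_)
  have hc6 : (0:ℝ) < 2 * b + 6 := by linarith
  set ε := min 1 (δ / (2 * b + 6)) with hεdef
  have hεpos : 0 < ε := lt_min one_pos (by positivity)
  have hε1 : ε ≤ 1 := min_le_left _ _
  have := key ε hεpos hε1
  have hεle : ε * (2 * b + 6) ≤ δ := by
    have : ε ≤ δ / (2 * b + 6) := min_le_right _ _
    calc ε * (2 * b + 6) ≤ (δ / (2 * b + 6)) * (2 * b + 6) :=
          mul_le_mul_of_nonneg_right this hc6.le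
      _ = δ := by field_simp
  linarith

include hone in
theorem integral_rieszMeasure (f : C(X, ℝ)) :
    ∫ x, f x ∂(rieszMeasure Λ hpos) = Λ f := by
  refine le_antisymm ?_ (le_integral_rieszMeasure Λ hpos hone f)
  have h := le_integral_rieszMeasure Λ hpos hone (-f)
  rw [map_neg] at h
  have : ∫ x, (-f : C(X,ℝ)) x ∂(rieszMeasure Λ hpos) = -∫ x, f x ∂(rieszMeasure Λ hpos) := by
    simp only [ContinuousMap.neg_apply]
    exact integral_neg _
  rw [this] at h
  linarith

end Meas

end RMK0

section HahnBanach

variable {K L : Type*}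
    [TopologicalSpace K] [CompactSpace K] [T2Space K]
    [TopologicalSpace L] [CompactSpace L] [T2Space L] [MeasurableSpace L] [BorelSpace L]

/-- The set of integrals of continuous functions on `L` dominating `φ` through `p`. -/
def DD (p : K → L) (μ : Measure L) (φ : C(K, ℝ)) : Set ℝ :=
  {t : ℝ | ∃ ψ : C(L, ℝ), (∀ x : K, φ x ≤ ψ (p x)) ∧ ∫ y, ψ y ∂μ = t}

/-- The sublinear upper envelope functional. -/
def NN (p : K → L) (μ : Measure L) (φ : C(K, ℝ)) : ℝ := sInf (DD p μ φ)

variable (p : K → L) (hps : Function.Surjective p) (μ : Measure L) [IsProbabilityMeasure μ]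

theorem cont_integrable (ψ : C(L, ℝ)) : Integrable ψ μ :=
  (integrable_const (‖ψ‖)).mono' ψ.continuous.aestronglyMeasurable
    (ae_of_all _ fun x => ψ.norm_coe_le_norm x)

theorem norm_bound (φ : C(K, ℝ)) (x : K) : -‖φ‖ ≤ φ x ∧ φ x ≤ ‖φ‖ :=
  abs_le.mp (by simpa [Real.norm_eq_abs] using φ.norm_coe_le_norm x)

theorem keyint (ψ : C(L, ℝ)) (c : ℝ) : ∫ y, (ψ y + c) ∂μ = (∫ y, ψ y ∂μ) + c := by
  rw [integral_add (cont_integrable μ ψ) (integrable_const c)]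
  simp

theorem DD_nonempty (φ : C(K, ℝ)) : (DD p μ φ).Nonempty :=
  ⟨∫ y, (ContinuousMap.const L ‖φ‖) y ∂μ, ContinuousMap.const L ‖φ‖,
    fun x => by simpa using (norm_bound φ x).2, rfl⟩

include hps in
theorem DD_bddBelow (φ : C(K, ℝ)) : BddBelow (DD p μ φ) := by
  refine ⟨-‖φ‖, ?_⟩
  rintro t ⟨ψ, hψ, rfl⟩
  have hlb : ∀ y : L, -‖φ‖ ≤ ψ y := by
    intro y
    obtain ⟨x, rfl⟩ := hps y
    exact le_trans (norm_bound φ x).1 (hψ x)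
  calc -‖φ‖ = ∫ _ : L, -‖φ‖ ∂μ := by simp
    _ ≤ ∫ y, ψ y ∂μ := integral_mono (integrable_const _) (cont_integrable μ ψ) hlb

include hps in
theorem NN_add (φ₁ φ₂ : C(K, ℝ)) : NN p μ (φ₁ + φ₂) ≤ NN p μ φ₁ + NN p μ φ₂ := by
  refine le_of_forall_pos_le_add fun ε hε => ?_
  obtain ⟨t₁, ht₁, ht₁'⟩ := Real.lt_sInf_add_pos (DD_nonempty p μ φ₁) (half_pos hε)
  obtain ⟨t₂, ht₂, ht₂'⟩ := Real.lt_sInf_add_pos (DD_nonempty p μ φ₂) (half_pos hε)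
  obtain ⟨ψ₁, hψ₁, rfl⟩ := ht₁
  obtain ⟨ψ₂, hψ₂, rfl⟩ := ht₂
  have hd : NN p μ (φ₁ + φ₂) ≤ ∫ y, (ψ₁ + ψ₂) y ∂μ :=
    csInf_le (DD_bddBelow p hps μ _) ⟨ψ₁ + ψ₂, fun x => by
      simpa using add_le_add (hψ₁ x) (hψ₂ x), rfl⟩
  have he : ∫ y, (ψ₁ + ψ₂) y ∂μ = (∫ y, ψ₁ y ∂μ) + ∫ y, ψ₂ y ∂μ := by
    simpa using integral_add (cont_integrable μ ψ₁) (cont_integrable μ ψ₂)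
  rw [he] at hd
  unfold NN at *
  linarith

include hps in
theorem NN_smul (c : ℝ) (hc : 0 < c) (φ : C(K, ℝ)) : NN p μ (c • φ) = c * NN p μ φ := by
  have hset : DD p μ (c • φ) = c • DD p μ φ := by
    ext t
    constructor
    · rintro ⟨ψ, hψ, rfl⟩
      refine ⟨∫ y, (c⁻¹ • ψ) y ∂μ, ⟨c⁻¹ • ψ, fun x => ?_, rfl⟩, ?_⟩
      · have h := hψ x
        simp only [ContinuousMap.smul_apply, smul_eq_mul] at h ⊢
        calc φ x = c⁻¹ * (c * φ x) := by field_simp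
          _ ≤ c⁻¹ * ψ (p x) := mul_le_mul_of_nonneg_left h (inv_nonneg.2 hc.le)
      · have e : ∫ y, (c⁻¹ • ψ) y ∂μ = c⁻¹ * ∫ y, ψ y ∂μ := by
          simp only [ContinuousMap.smul_apply, smul_eq_mul]
          exact integral_const_mul c⁻¹ _
        rw [e]
        show c • (c⁻¹ * ∫ y, ψ y ∂μ) = _
        rw [smul_eq_mul]
        field_simp
    · rintro ⟨s, ⟨ψ, hψ, rfl⟩, rfl⟩
      refine ⟨c • ψ, fun x => ?_, ?_⟩
      · simp only [ContinuousMap.smul_apply, smul_eq_mul]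
        exact mul_le_mul_of_nonneg_left (hψ x) hc.le
      · simp only [ContinuousMap.smul_apply, smul_eq_mul]
        exact integral_const_mul c _
  rw [NN, NN, hset, Real.sInf_smul_of_nonneg hc.le, smul_eq_mul]

include hps in
theorem NN_add_const (φ : C(K, ℝ)) (c : ℝ) :
    NN p μ (φ + ContinuousMap.const K c) = NN p μ φ + c := by
  refine le_antisymm ?_ ?_
  · refine le_of_forall_pos_le_add fun ε hε => ?_
    obtain ⟨t, ⟨ψ, hψ, rfl⟩, ht'⟩ := Real.lt_sInf_add_pos (DD_nonempty p μ φ) hε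
    have hd : NN p μ (φ + ContinuousMap.const K c) ≤ ∫ y, (ψ + ContinuousMap.const L c) y ∂μ :=
      csInf_le (DD_bddBelow p hps μ _) ⟨ψ + ContinuousMap.const L c, fun x => by
        simpa using add_le_add_right (hψ x) c, rfl⟩
    have he : ∫ y, (ψ + ContinuousMap.const L c) y ∂μ = (∫ y, ψ y ∂μ) + c := by
      simpa using keyint μ ψ c
    rw [he] at hd
    unfold NN at hd ⊢
    linarith
  · refine le_of_forall_pos_le_add fun ε hε => ?_
    obtain ⟨t, ⟨ψ, hψ, rfl⟩, ht'⟩ :=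
      Real.lt_sInf_add_pos (DD_nonempty p μ (φ + ContinuousMap.const K c)) hε
    have hd : NN p μ φ ≤ ∫ y, (ψ + ContinuousMap.const L (-c)) y ∂μ :=
      csInf_le (DD_bddBelow p hps μ _) ⟨ψ + ContinuousMap.const L (-c), fun x => by
        have := hψ x
        simp only [ContinuousMap.add_apply, ContinuousMap.const_apply] at this ⊢
        linarith, rfl⟩
    have he : ∫ y, (ψ + ContinuousMap.const L (-c)) y ∂μ = (∫ y, ψ y ∂μ) + (-c) := by
      simpa using keyint μ ψ (-c)
    rw [he] at hd
    unfold NN at hd ⊢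
    linarith

include hps in
theorem NN_zero : NN p μ 0 = 0 := by
  refine le_antisymm (csInf_le (DD_bddBelow p hps μ _) ⟨0, by simp, by simp⟩) ?_
  refine le_csInf (DD_nonempty p μ 0) ?_
  rintro t ⟨ψ, hψ, rfl⟩
  refine integral_nonneg fun y => ?_
  obtain ⟨x, rfl⟩ := hps y
  simpa using hψ x

end HahnBanach


/-- Given a continuous surjection `p : K → L` of compact Hausdorff spaces and a regular
Borel probability measure `μ` on `L`, the possible values of `∫ φ dν` over all regular
Borel probability measures `ν` on `K` pushing forward to `μ` form exactly the interval
`[sup {∫ ψ dμ : ψ ∘ p ≤ φ}, inf {∫ ψ dμ : ψ ∘ p ≥ φ}]`. -/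
theorem stmt2 {K L : Type*}
    [TopologicalSpace K] [CompactSpace K] [T2Space K] [MeasurableSpace K] [BorelSpace K]
    [TopologicalSpace L] [CompactSpace L] [T2Space L] [MeasurableSpace L] [BorelSpace L]
    (p : K → L) (hpc : Continuous p) (hps : Function.Surjective p)
    (μ : Measure L) [IsProbabilityMeasure μ] [μ.Regular]
    (φ : C(K, ℝ)) (r : ℝ) :
    (∃ ν : Measure K, IsProbabilityMeasure ν ∧ ν.Regular ∧
      (∀ ψ : C(L, ℝ), ∫ x, ψ (p x) ∂ν = ∫ y, ψ y ∂μ) ∧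
      ∫ x, φ x ∂ν = r) ↔
    (sSup {t : ℝ | ∃ ψ : C(L, ℝ), (∀ x : K, ψ (p x) ≤ φ x) ∧ ∫ y, ψ y ∂μ = t} ≤ r ∧
      r ≤ sInf {t : ℝ | ∃ ψ : C(L, ℝ), (∀ x : K, φ x ≤ ψ (p x)) ∧ ∫ y, ψ y ∂μ = t}) := by
  constructor
  · rintro ⟨ν, hν, hreg, hpush, hint⟩
    have hKint : ∀ g : C(K, ℝ), Integrable g ν :=
      fun g => (integrable_const (‖g‖)).mono' g.continuous.aestronglyMeasurable
        (ae_of_all _ fun x => g.norm_coe_le_norm x)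
    constructor
    · refine csSup_le ?_ ?_
      · exact ⟨∫ y, (ContinuousMap.const L (-‖φ‖)) y ∂μ, ContinuousMap.const L (-‖φ‖),
          fun x => by simpa using (norm_bound φ x).1, rfl⟩
      · rintro t ⟨ψ, hψ, rfl⟩
        rw [← hpush ψ, ← hint]
        exact integral_mono (hKint (ψ.comp ⟨p, hpc⟩)) (hKint φ) hψ
    · refine le_csInf (DD_nonempty p μ φ) ?_
      rintro t ⟨ψ, hψ, rfl⟩
      rw [← hpush ψ, ← hint]
      exact integral_mono (hKint φ) (hKint (ψ.comp ⟨p, hpc⟩)) hψ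
  · rintro ⟨h1, h2⟩
    haveI hLne : Nonempty L := by
      by_contra h
      rw [not_nonempty_iff] at h
      have h0 := measure_univ (μ := μ)
      rw [Set.univ_eq_empty_iff.2 h, measure_empty] at h0
      exact zero_ne_one h0
    haveI hKne : Nonempty K := by
      obtain ⟨x, _⟩ := hps (Classical.arbitrary L)
      exact ⟨x⟩
    set c₀ : ℝ := ‖φ‖ + 1 with hc₀
    set g : C(K, ℝ) := φ + ContinuousMap.const K c₀ with hg
    have hg1 : ∀ x, (1 : ℝ) ≤ g x := fun x => by
      have := (norm_bound φ x).1
      simp only [hg, ContinuousMap.add_apply, ContinuousMap.const_apply, hc₀]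
      linarith
    have hgne : g ≠ 0 := fun h => by
      have h1' := hg1 (Classical.arbitrary K)
      rw [h] at h1'
      norm_num at h1'
    have hrNN : r ≤ NN p μ φ := h2
    have hSupBdd : BddAbove
        {t : ℝ | ∃ ψ : C(L, ℝ), (∀ x : K, ψ (p x) ≤ φ x) ∧ ∫ y, ψ y ∂μ = t} := by
      refine ⟨‖φ‖, ?_⟩
      rintro t ⟨ψ, hψ, rfl⟩
      have hub : ∀ y, ψ y ≤ ‖φ‖ := fun y => by
        obtain ⟨x, rfl⟩ := hps y
        exact (hψ x).trans (norm_bound φ x).2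
      calc ∫ y, ψ y ∂μ ≤ ∫ _ : L, ‖φ‖ ∂μ :=
            integral_mono (cont_integrable μ ψ) (integrable_const _) hub
        _ = ‖φ‖ := by simp
    have hnegr : -r ≤ NN p μ (-φ) := by
      refine le_csInf (DD_nonempty p μ _) ?_
      rintro t ⟨ψ, hψ, rfl⟩
      have hmem : (∫ y, (-ψ) y ∂μ) ∈
          {t : ℝ | ∃ ψ' : C(L, ℝ), (∀ x : K, ψ' (p x) ≤ φ x) ∧ ∫ y, ψ' y ∂μ = t} :=
        ⟨-ψ, fun x => by
          have := hψ x
          simp only [ContinuousMap.neg_apply] at this ⊢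
          linarith, rfl⟩
      have hle := (le_csSup hSupBdd hmem).trans h1
      have he : ∫ y, (-ψ) y ∂μ = -∫ y, ψ y ∂μ := by
        simp only [ContinuousMap.neg_apply]
        exact integral_neg _
      rw [he] at hle
      linarith
    set F : C(K, ℝ) →ₗ.[ℝ] ℝ := LinearPMap.mkSpanSingleton g (r + c₀) hgne with hFdef
    have hdom : ∀ v : F.domain, F v ≤ NN p μ v := by
      rintro ⟨v, hv⟩
      obtain ⟨a, rfl⟩ := Submodule.mem_span_singleton.1 hv
      have happ : F ⟨a • g, hv⟩ = a • (r + c₀) :=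
        LinearPMap.mkSpanSingleton'_apply _ _ _ a hv
      rw [happ, smul_eq_mul]
      show a * (r + c₀) ≤ NN p μ (a • g)
      rcases lt_trichotomy a 0 with ha | ha | ha
      · have hrw : a • g = (-a) • (-g) := by rw [smul_neg, neg_smul, neg_neg]
        have hgneg : (-g : C(K, ℝ)) = (-φ) + ContinuousMap.const K (-c₀) := by
          ext x
          simp [hg]
          ring
        have he : NN p μ (a • g) = (-a) * NN p μ (-g) := by
          rw [hrw]
          exact NN_smul p hps μ (-a) (by linarith) (-g)
        rw [he, hgneg, NN_add_const p hps μ (-φ) (-c₀)]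
        nlinarith [mul_le_mul_of_nonneg_left hnegr (neg_nonneg.2 ha.le)]
      · rw [ha, zero_mul, zero_smul, NN_zero p hps μ]
      · have he : NN p μ (a • g) = a * NN p μ g := NN_smul p hps μ a ha g
        rw [he, hg, NN_add_const p hps μ φ c₀]
        nlinarith [mul_le_mul_of_nonneg_left (add_le_add_right hrNN c₀) ha.le]
    obtain ⟨Λ, hΛext, hΛle⟩ := exists_extension_of_le_sublinear F (NN p μ)
      (fun c hc x => NN_smul p hps μ c hc x) (fun x y => NN_add p hps μ x y) hdom
    have hpos : ∀ f : C(K, ℝ), (∀ x, 0 ≤ f x) → 0 ≤ Λ f := by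
      intro f hf
      have h1' : Λ (-f) ≤ NN p μ (-f) := hΛle (-f)
      have h2' : NN p μ (-f) ≤ ∫ y, (0 : C(L, ℝ)) y ∂μ :=
        csInf_le (DD_bddBelow p hps μ _) ⟨0, fun x => by simpa using hf x, rfl⟩
      have h3' : ∫ y, (0 : C(L, ℝ)) y ∂μ = 0 := by simp
      rw [map_neg] at h1'
      linarith
    have hcomp : ∀ ψ : C(L, ℝ), Λ (ψ.comp ⟨p, hpc⟩) = ∫ y, ψ y ∂μ := by
      intro ψ
      have hub : Λ (ψ.comp ⟨p, hpc⟩) ≤ ∫ y, ψ y ∂μ :=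
        (hΛle _).trans (csInf_le (DD_bddBelow p hps μ _) ⟨ψ, fun x => le_refl _, rfl⟩)
      have hlb : Λ (-(ψ.comp ⟨p, hpc⟩)) ≤ ∫ y, (-ψ) y ∂μ :=
        (hΛle _).trans (csInf_le (DD_bddBelow p hps μ _)
          ⟨-ψ, fun x => le_of_eq (by simp), rfl⟩)
      rw [map_neg] at hlb
      have he : ∫ y, (-ψ) y ∂μ = -∫ y, ψ y ∂μ := by
        simp only [ContinuousMap.neg_apply]
        exact integral_neg _
      rw [he] at hlb
      linarith
    have hone : Λ 1 = 1 := by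
      have e : (1 : C(K, ℝ)) = (1 : C(L, ℝ)).comp ⟨p, hpc⟩ := by ext x; simp
      rw [e, hcomp]
      simp
    have hΛg : Λ g = r + c₀ := by
      have h := hΛext ⟨g, Submodule.mem_span_singleton_self g⟩
      rw [h]
      exact LinearPMap.mkSpanSingleton_apply ℝ ℝ hgne (r + c₀)
    have hΛφ : Λ φ = r := by
      have e : g = φ + (c₀ : ℝ) • (1 : C(K, ℝ)) := by
        ext x
        simp [hg]
      rw [e, map_add, LinearMap.map_smul, hone, smul_eq_mul, mul_one] at hΛg
      linarith
    haveI hprob := RMK0.isProbabilityRieszMeasure Λ hpos hone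
    refine ⟨RMK0.rieszMeasure Λ hpos, hprob, inferInstance, ?_, ?_⟩
    · intro ψ
      have h := RMK0.integral_rieszMeasure Λ hpos hone (ψ.comp ⟨p, hpc⟩)
      rw [hcomp] at h
      exact h
    · rw [RMK0.integral_rieszMeasure Λ hpos hone φ, hΛφ]


end
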